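/- Let G be a connected simple graph on n ≥ 2 vertices with distance matrix D whose (i,j) entries are d_{ij}. Then DEE(G) < n - 1 + e^{√(2·Σ_{i<j} d_{ij}² - 1)}. -/

import Mathlib

namespace DistanceEstrada

variable {n : ℕ}

/-- The distance matrix of a simple graph on `Fin n`. -/
noncomputable def distMatrix (G : SimpleGraph (Fin n)) : Matrix (Fin n) (Fin n) ℝ :=
  fun i j => (G.dist i j : ℝ)

lemma distMatrix_isHermitian (G : SimpleGraph (Fin n)) : (distMatrix G).IsHermitian := by
  unfold Matrix.IsHermitian
  ext i j
  simp [distMatrix, Matrix.conjTranspose_apply, SimpleGraph.dist_comm]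

/-- The distance eigenvalues of `G` (in no particular order). -/
noncomputable def distEig (G : SimpleGraph (Fin n)) : Fin n → ℝ :=
  (distMatrix_isHermitian G).eigenvalues

/-- The distance Estrada index. -/
noncomputable def DEE (G : SimpleGraph (Fin n)) : ℝ :=
  ∑ i, Real.exp (distEig G i)

open Classical in
/-- The adjacency matrix of `G` over `ℝ`. -/
noncomputable def adjMat (G : SimpleGraph (Fin n)) : Matrix (Fin n) (Fin n) ℝ :=
  fun i j => if G.Adj i j then 1 else 0

lemma adjMat_isHermitian (G : SimpleGraph (Fin n)) : (adjMat G).IsHermitian := by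
  unfold Matrix.IsHermitian
  ext i j
  simp only [adjMat, Matrix.conjTranspose_apply, star_trivial]
  rw [SimpleGraph.adj_comm]

/-- The adjacency eigenvalues of `G` (in no particular order). -/
noncomputable def adjEig (G : SimpleGraph (Fin n)) : Fin n → ℝ :=
  (adjMat_isHermitian G).eigenvalues

/-- The Estrada index. -/
noncomputable def EE (G : SimpleGraph (Fin n)) : ℝ :=
  ∑ i, Real.exp (adjEig G i)


open Real Matrix
open scoped Nat


/- ## Auxiliary analytic lemmas -/

lemma cubic_le_exp {u : ℝ} (hu : 0 ≤ u) : 1 + u + u^2/2 + u^3/6 ≤ Real.exp u := by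
  have h := Real.sum_le_exp_of_nonneg hu 4
  simp [Finset.sum_range_succ, Nat.factorial] at h
  linarith

lemma two_mul_le_exp_sub {u : ℝ} (hu : 0 ≤ u) : 2*u ≤ Real.exp u - Real.exp (-u) := by
  have hp : (0:ℝ) < 1 + u + u^2/2 + u^3/6 := by positivity
  have ha := cubic_le_exp hu
  have hapos : (0:ℝ) < Real.exp u := Real.exp_pos u
  have hb : Real.exp u * Real.exp (-u) = 1 := by
    rw [← Real.exp_add]; simp
  have hbpos : (0:ℝ) < Real.exp (-u) := Real.exp_pos _
  have hquad : (1 + u + u^2/2 + u^3/6)^2 - 2*u*(1 + u + u^2/2 + u^3/6) - 1 ≥ 0 := by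
    nlinarith [sq_nonneg u, sq_nonneg (u^2)]
  nlinarith [mul_nonneg (sub_nonneg.mpr ha)
    (by nlinarith : (0:ℝ) ≤ Real.exp u + (1 + u + u^2/2 + u^3/6) - 2*u)]

lemma f_abs (t : ℝ) : Real.exp t - 1 - t ≤ Real.exp |t| - 1 - |t| := by
  rcases le_or_gt 0 t with h | h
  · rw [abs_of_nonneg h]
  · rw [abs_of_neg h]
    have := two_mul_le_exp_sub (u := -t) (by linarith)
    simp only [neg_neg] at this
    linarith

lemma exp_eq_two_add_tsum (t : ℝ) :
    Real.exp t = (1 + t) + ∑' k : ℕ, t^(k+2)/((k+2)! : ℝ) := by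
  have hs : Summable (fun k : ℕ => t^k/(k ! : ℝ)) := Real.summable_pow_div_factorial t
  have h := Summable.sum_add_tsum_nat_add (f := fun k : ℕ => t^k/(k ! : ℝ)) 2 hs
  have hexp : Real.exp t = ∑' k : ℕ, t^k/(k ! : ℝ) := by
    rw [Real.exp_eq_exp_ℝ, NormedSpace.exp_eq_tsum_div]
  rw [hexp, ← h]
  simp [Finset.sum_range_succ]

lemma summable_shift (t : ℝ) : Summable (fun k : ℕ => t^(k+2)/((k+2)! : ℝ)) :=
  (summable_nat_add_iff 2).mpr (Real.summable_pow_div_factorial t)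

lemma pair_lemma {a b : ℝ} (ha : 0 ≤ a) (hb : 0 ≤ b) :
    (Real.exp a - 1 - a) + (Real.exp b - 1 - b) ≤
      Real.exp (Real.sqrt (a^2+b^2)) - 1 - Real.sqrt (a^2+b^2) := by
  set c := Real.sqrt (a^2+b^2) with hc
  have hc0 : 0 ≤ c := Real.sqrt_nonneg _
  have hc2 : c^2 = a^2+b^2 := Real.sq_sqrt (by positivity)
  have hac : a ≤ c := by
    rw [hc]; exact (Real.le_sqrt ha (by positivity)).mpr (by nlinarith)
  have hbc : b ≤ c := by
    rw [hc]; exact (Real.le_sqrt hb (by positivity)).mpr (by nlinarith)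
  have key : (∑' k : ℕ, a^(k+2)/((k+2)! : ℝ)) + ∑' k : ℕ, b^(k+2)/((k+2)! : ℝ)
      ≤ ∑' k : ℕ, c^(k+2)/((k+2)! : ℝ) := by
    rw [← Summable.tsum_add (summable_shift a) (summable_shift b)]
    apply Summable.tsum_le_tsum _ ((summable_shift a).add (summable_shift b)) (summable_shift c)
    intro k
    have h1 : a^(k+2) + b^(k+2) ≤ c^(k+2) := by
      have e1 : a^(k+2) = a^k * a^2 := by ring
      have e2 : b^(k+2) = b^k * b^2 := by ring
      have e3 : c^(k+2) = c^k * c^2 := by ring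
      rw [e1, e2, e3, hc2]
      have h2 := pow_le_pow_left₀ ha hac k
      have h3 := pow_le_pow_left₀ hb hbc k
      nlinarith [sq_nonneg a, sq_nonneg b, pow_nonneg ha k, pow_nonneg hb k]
    rw [← add_div]
    gcongr
  have ea := exp_eq_two_add_tsum a
  have eb := exp_eq_two_add_tsum b
  have ec := exp_eq_two_add_tsum c
  rw [ea, eb, ec]
  linarith

lemma sum_f_le {ι : Type*} (s : Finset ι) (lam : ι → ℝ) :
    ∑ i ∈ s, (Real.exp (lam i) - 1 - lam i) ≤
      Real.exp (Real.sqrt (∑ i ∈ s, (lam i)^2)) - 1 - Real.sqrt (∑ i ∈ s, (lam i)^2) := by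
  induction s using Finset.cons_induction with
  | empty => simp
  | cons a s ha ih =>
      rw [Finset.sum_cons, Finset.sum_cons]
      have h1 : Real.exp (lam a) - 1 - lam a ≤ Real.exp |lam a| - 1 - |lam a| := f_abs _
      have h2 := pair_lemma (abs_nonneg (lam a)) (Real.sqrt_nonneg (∑ i ∈ s, (lam i)^2))
      rw [sq_abs, Real.sq_sqrt (by positivity)] at h2
      linarith

lemma exp_ub_small {h : ℝ} (h0 : 0 ≤ h) (h1 : h ≤ 1) :
    Real.exp h ≤ 1 + h + h^2/2 + (2/9)*h^3 := by
  have := Real.exp_bound' h0 h1 (n := 3) (by norm_num)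
  simp [Finset.sum_range_succ, Nat.factorial] at this
  nlinarith [this]

lemma exp_ub_quad {h : ℝ} (h0 : 0 ≤ h) (h1 : h ≤ 1.5) :
    Real.exp h ≤ 1 + h + h^2 := by
  rcases le_or_gt h 1 with hc | hc
  · have := exp_ub_small h0 hc
    nlinarith
  · have key : Real.exp h = Real.exp 1 * Real.exp (h - 1) := by
      rw [← Real.exp_add]; ring_nf
    have ht0 : (0:ℝ) ≤ h - 1 := by linarith
    have ht1 : h - 1 ≤ 1 := by linarith
    have hb := exp_ub_small ht0 ht1
    have he : Real.exp 1 < 2.7182818286 := Real.exp_one_lt_d9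
    have hepos : (0:ℝ) < Real.exp 1 := Real.exp_pos 1
    have hBpos : (0:ℝ) ≤ 1 + (h-1) + (h-1)^2/2 + (2/9)*(h-1)^3 := by positivity
    have step1 : Real.exp h ≤ Real.exp 1 * (1 + (h-1) + (h-1)^2/2 + (2/9)*(h-1)^3) := by
      rw [key]; exact mul_le_mul_of_nonneg_left hb hepos.le
    have step2 : Real.exp 1 * (1 + (h-1) + (h-1)^2/2 + (2/9)*(h-1)^3) ≤
        2.7182818286 * (1 + (h-1) + (h-1)^2/2 + (2/9)*(h-1)^3) :=
      mul_le_mul_of_nonneg_right he.le hBpos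
    refine step1.trans (step2.trans ?_)
    nlinarith [mul_nonneg ht0 (by linarith : (0:ℝ) ≤ 1.5 - h),
      mul_nonneg (mul_nonneg ht0 ht0) (by linarith : (0:ℝ) ≤ 1.5 - h)]

lemma L_lemma {y : ℝ} (hy : 1 ≤ y) :
    Real.exp y * (2.5*y + 1 - y^2) < 2.5*y + 5*y^2 := by
  rcases le_or_gt y 2.5 with h25 | h25
  · have key : Real.exp y = Real.exp 1 * Real.exp (y - 1) := by
      rw [← Real.exp_add]; ring_nf
    have hb := exp_ub_quad (h := y - 1) (by linarith) (by linarith)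
    have he : Real.exp 1 < 2.7182818286 := Real.exp_one_lt_d9
    have hepos : (0:ℝ) < Real.exp 1 := Real.exp_pos 1
    have hq : (0:ℝ) < 2.5*y + 1 - y^2 := by nlinarith
    have hP : (0:ℝ) < 1 + (y-1) + (y-1)^2 := by nlinarith [sq_nonneg (y-1)]
    have hup : Real.exp y ≤ Real.exp 1 * (1 + (y-1) + (y-1)^2) := by
      rw [key]; exact mul_le_mul_of_nonneg_left hb hepos.le
    have step1 : Real.exp y * (2.5*y + 1 - y^2) ≤
        Real.exp 1 * (1 + (y-1) + (y-1)^2) * (2.5*y + 1 - y^2) :=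
      mul_le_mul_of_nonneg_right hup hq.le
    have step2 : Real.exp 1 * (1 + (y-1) + (y-1)^2) * (2.5*y + 1 - y^2) ≤
        2.7182818286 * (1 + (y-1) + (y-1)^2) * (2.5*y + 1 - y^2) := by
      apply mul_le_mul_of_nonneg_right _ hq.le
      exact mul_le_mul_of_nonneg_right he.le hP.le
    refine (step1.trans step2).trans_lt ?_
    nlinarith [mul_nonneg (by linarith : (0:ℝ) ≤ y - 1) (by linarith : (0:ℝ) ≤ 2.5 - y),
      mul_nonneg (mul_nonneg (by linarith : (0:ℝ) ≤ y - 1) (by linarith : (0:ℝ) ≤ y - 1))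
        (by linarith : (0:ℝ) ≤ 2.5 - y),
      mul_nonneg (mul_nonneg (by linarith : (0:ℝ) ≤ y - 1) (by linarith : (0:ℝ) ≤ 2.5 - y))
        (by linarith : (0:ℝ) ≤ 2.5 - y),
      sq_nonneg (y-1), sq_nonneg (y-2.5), sq_nonneg ((y-1)*(y-2.5))]
  · rcases le_or_gt y 2.9 with h29 | h29
    · rcases le_or_gt (2.5*y + 1 - y^2) 0 with hq | hq
      · nlinarith [mul_nonpos_of_nonneg_of_nonpos (Real.exp_pos y).le hq]
      · have hey : Real.exp y ≤ Real.exp 3 := Real.exp_le_exp.mpr (by linarith)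
        have he3 : Real.exp 3 < 20.1 := by
          have he : Real.exp 1 < 2.7182818286 := Real.exp_one_lt_d9
          have h3 : Real.exp 3 = Real.exp 1 * Real.exp 1 * Real.exp 1 := by
            rw [← Real.exp_add, ← Real.exp_add]; norm_num
          rw [h3]
          nlinarith [Real.exp_pos 1]
        have hle : Real.exp y * (2.5*y + 1 - y^2) ≤ 20.1 * (2.5*y + 1 - y^2) := by
          apply mul_le_mul_of_nonneg_right _ hq.le
          linarith
        refine hle.trans_lt ?_
        nlinarith
    · have hq : 2.5*y + 1 - y^2 ≤ 0 := by nlinarith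
      nlinarith [mul_nonpos_of_nonneg_of_nonpos (Real.exp_pos y).le hq]

lemma key_ineq {x y : ℝ} (hy : 1 ≤ y) (hxy : y ≤ x) :
    Real.exp x + Real.exp y < 1 + x + y + Real.exp (Real.sqrt (x^2 + y^2 - 1)) := by
  have hx1 : 1 ≤ x := hy.trans hxy
  have hx0 : (0:ℝ) < x := by linarith
  have hy0 : (0:ℝ) < y := by linarith
  have h0 : (0:ℝ) ≤ x^2 + y^2 - 1 := by nlinarith
  set s := Real.sqrt (x^2 + y^2 - 1) with hs
  have hs0 : 0 ≤ s := Real.sqrt_nonneg _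
  have hs2 : s^2 = x^2 + y^2 - 1 := Real.sq_sqrt h0
  have hsx : x ≤ s := by
    rw [hs]; exact (Real.le_sqrt hx0.le h0).mpr (by nlinarith)
  have hs15 : s ≤ 1.5 * x := by
    have h1 : s ≤ Real.sqrt ((1.5*x)^2) := Real.sqrt_le_sqrt (by nlinarith)
    rwa [Real.sqrt_sq (by linarith)] at h1
  have hexp1 : Real.exp x * (1 + (s - x)) ≤ Real.exp s := by
    have h1 : (s - x) + 1 ≤ Real.exp (s - x) := Real.add_one_le_exp _
    have h2 : Real.exp s = Real.exp x * Real.exp (s - x) := by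
      rw [← Real.exp_add]; ring_nf
    rw [h2]
    apply mul_le_mul_of_nonneg_left (by linarith) (Real.exp_pos x).le
  have hstep1 : Real.exp x * (y^2 - 1) ≤ Real.exp x * (s - x) * (2.5 * x) := by
    have hss : (s - x) * (s + x) = y^2 - 1 := by nlinarith
    have h1 : (y^2 - 1) ≤ (s - x) * (2.5 * x) := by
      calc y^2 - 1 = (s - x) * (s + x) := hss.symm
        _ ≤ (s - x) * (2.5 * x) := by
            apply mul_le_mul_of_nonneg_left (by linarith) (by linarith)
    calc Real.exp x * (y^2 - 1) ≤ Real.exp x * ((s - x) * (2.5 * x)) :=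
          mul_le_mul_of_nonneg_left h1 (Real.exp_pos x).le
      _ = Real.exp x * (s - x) * (2.5 * x) := by ring
  have hstep2 : Real.exp y * x ≤ Real.exp x * y := by
    have h1 : (x - y) + 1 ≤ Real.exp (x - y) := Real.add_one_le_exp _
    have h2 : Real.exp x = Real.exp y * Real.exp (x - y) := by
      rw [← Real.exp_add]; ring_nf
    have h3 : Real.exp y * (1 + (x - y)) ≤ Real.exp x := by
      rw [h2]; exact mul_le_mul_of_nonneg_left (by linarith) (Real.exp_pos y).le
    have h4 : x ≤ (1 + (x - y)) * y := by nlinarith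
    calc Real.exp y * x ≤ Real.exp y * ((1 + (x - y)) * y) :=
          mul_le_mul_of_nonneg_left h4 (Real.exp_pos y).le
      _ = (Real.exp y * (1 + (x - y))) * y := by ring
      _ ≤ Real.exp x * y := mul_le_mul_of_nonneg_right h3 hy0.le
  have hL : 2.5 * y * (Real.exp y - 1 - 2*y) < Real.exp y * (y^2 - 1) := by
    have := L_lemma hy
    nlinarith
  have hxy25 : (0:ℝ) < 2.5 * x * y := by positivity
  have main : (Real.exp y - 1 - x - y) * (2.5 * x * y)
      < (Real.exp x * (s - x)) * (2.5 * x * y) := by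
    have c1 : Real.exp x * (y^2 - 1) * y ≤ Real.exp x * (s - x) * (2.5 * x) * y :=
      mul_le_mul_of_nonneg_right hstep1 hy0.le
    have c2 : Real.exp y * x * (y^2 - 1) ≤ Real.exp x * y * (y^2 - 1) := by
      apply mul_le_mul_of_nonneg_right hstep2 (by nlinarith)
    have c3 : 2.5 * y * (Real.exp y - 1 - 2*y) * x < Real.exp y * (y^2 - 1) * x :=
      mul_lt_mul_of_pos_right hL hx0
    have c4 : (Real.exp y - 1 - x - y) * (2.5 * x * y)
        ≤ (Real.exp y - 1 - 2*y) * (2.5 * x * y) := by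
      apply mul_le_mul_of_nonneg_right _ hxy25.le
      linarith
    nlinarith [c1, c2, c3, c4]
  have main2 : Real.exp y - 1 - x - y < Real.exp x * (s - x) :=
    lt_of_mul_lt_mul_right (by linarith [main]) hxy25.le
  nlinarith [hexp1, main2]

/- ## Auxiliary matrix lemmas -/

lemma helper_trace {k : ℕ} (U E : Matrix (Fin k) (Fin k) ℝ) (h : star U * U = 1) :
    (U * E * star U).trace = E.trace := by
  calc (U * E * star U).trace = (star U * U * E).trace := by rw [Matrix.trace_mul_cycle]
    _ = E.trace := by rw [h, one_mul]

lemma helper_trace_sq {k : ℕ} (U E : Matrix (Fin k) (Fin k) ℝ) (h : star U * U = 1) :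
    ((U * E * star U) * (U * E * star U)).trace = (E * E).trace := by
  have h1 : (U * E * star U) * (U * E * star U) = U * E * (star U * U) * E * star U := by
    simp only [Matrix.mul_assoc]
  rw [h1, h, mul_one, Matrix.trace_mul_comm]
  calc (star U * (U * E * E)).trace = (star U * U * E * E).trace := by
        simp only [Matrix.mul_assoc]
    _ = (E * E).trace := by rw [h, one_mul]

lemma trace_eq_sum_eig {m : ℕ} {A : Matrix (Fin m) (Fin m) ℝ} (hA : A.IsHermitian) :
    A.trace = ∑ i, hA.eigenvalues i := by
  conv_lhs => rw [hA.spectral_theorem]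
  rw [Unitary.conjStarAlgAut_apply, helper_trace _ _ (Unitary.coe_star_mul_self hA.eigenvectorUnitary), Matrix.trace_diagonal]
  simp [RCLike.ofReal_real_eq_id]

lemma trace_sq_eq_sum_sq_eig {m : ℕ} {A : Matrix (Fin m) (Fin m) ℝ} (hA : A.IsHermitian) :
    (A * A).trace = ∑ i, (hA.eigenvalues i)^2 := by
  conv_lhs => rw [hA.spectral_theorem]
  rw [Unitary.conjStarAlgAut_apply, helper_trace_sq _ _ (Unitary.coe_star_mul_self hA.eigenvectorUnitary),
    Matrix.diagonal_mul_diagonal, Matrix.trace_diagonal]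
  simp [RCLike.ofReal_real_eq_id, sq]

lemma sum_offdiag {k : ℕ} (f : Fin k → Fin k → ℝ) (hsym : ∀ i j, f i j = f j i)
    (hdiag : ∀ i, f i i = 0) :
    ∑ i, ∑ j, f i j
      = 2 * ∑ p ∈ Finset.univ.filter (fun p : Fin k × Fin k => p.1 < p.2), f p.1 p.2 := by
  have h1 : ∑ i, ∑ j, f i j = ∑ p : Fin k × Fin k, f p.1 p.2 := by
    rw [← Finset.univ_product_univ, Finset.sum_product]
  rw [h1]
  rw [← Finset.sum_filter_add_sum_filter_not Finset.univ (fun p : Fin k × Fin k => p.1 < p.2)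
    (fun p => f p.1 p.2)]
  have h2 : ∑ p ∈ Finset.univ.filter (fun p : Fin k × Fin k => ¬ p.1 < p.2), f p.1 p.2
      = ∑ p ∈ Finset.univ.filter (fun p : Fin k × Fin k => p.2 < p.1), f p.1 p.2 := by
    symm
    apply Finset.sum_subset
    · intro p hp
      simp only [Finset.mem_filter, Finset.mem_univ, true_and] at hp ⊢
      exact lt_asymm hp
    · intro p hp hnp
      simp only [Finset.mem_filter, Finset.mem_univ, true_and] at hp hnp
      have he : p.1 = p.2 := le_antisymm (le_of_not_gt hnp) (le_of_not_gt hp)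
      rw [he]
      exact hdiag _
  have h3 : ∑ p ∈ Finset.univ.filter (fun p : Fin k × Fin k => p.2 < p.1), f p.1 p.2
      = ∑ p ∈ Finset.univ.filter (fun p : Fin k × Fin k => p.1 < p.2), f p.1 p.2 := by
    apply Finset.sum_nbij' (i := Prod.swap) (j := Prod.swap)
    · intro p hp
      simp only [Finset.mem_filter, Finset.mem_univ, true_and] at hp ⊢
      exact hp
    · intro p hp
      simp only [Finset.mem_filter, Finset.mem_univ, true_and] at hp ⊢
      exact hp
    · intro p _; simp
    · intro p _; simp
    · intro p _
      simp only [Prod.fst_swap, Prod.snd_swap]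
      exact hsym p.1 p.2
  rw [h2, h3]
  ring


/-- Intermediate bound in the proof of Theorem 5: for a connected graph `G` on `n ≥ 2` vertices,
`DEE(G) < n - 1 + e^{√(2 Σ_{i<j} d_{ij}² - 1)}`. -/
theorem distance_estrada_upper_bound_moments {n : ℕ} (hn : 2 ≤ n)
    (G : SimpleGraph (Fin n)) (hconn : G.Connected) :
    DEE G < (n : ℝ) - 1 + Real.exp (Real.sqrt
      (2 * ∑ p ∈ Finset.univ.filter (fun p : Fin n × Fin n => p.1 < p.2),
        (G.dist p.1 p.2 : ℝ) ^ 2 - 1)) := by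
  classical
  have hD := distMatrix_isHermitian G
  set lam : Fin n → ℝ := distEig G with hlam
  have hn2 : (2:ℝ) ≤ (n:ℝ) := by exact_mod_cast hn
  -- sum of eigenvalues is zero
  have hsum0 : ∑ i, lam i = 0 := by
    have h := trace_eq_sum_eig hD
    have htr : (distMatrix G).trace = 0 := by
      simp [Matrix.trace, Matrix.diag, distMatrix, SimpleGraph.dist_self]
    rw [htr] at h
    exact h.symm
  -- sum of squares
  set M : ℝ := ∑ i, ∑ j, (G.dist i j : ℝ)^2 with hMdef
  have hsumsq : ∑ i, (lam i)^2 = M := by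
    have h := trace_sq_eq_sum_sq_eig hD
    have htr : ((distMatrix G) * (distMatrix G)).trace = M := by
      rw [Matrix.trace]
      simp only [Matrix.diag, Matrix.mul_apply, distMatrix, hMdef]
      apply Finset.sum_congr rfl
      intro i _
      apply Finset.sum_congr rfl
      intro j _
      rw [SimpleGraph.dist_comm (u := j)]
      ring
    rw [htr] at h
    exact h.symm
  have hM2 : M = 2 * ∑ p ∈ Finset.univ.filter (fun p : Fin n × Fin n => p.1 < p.2),
      (G.dist p.1 p.2 : ℝ)^2 := by
    apply sum_offdiag
    · intro i j; rw [SimpleGraph.dist_comm]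
    · intro i; simp
  -- M ≥ n(n-1)
  have hd1 : ∀ i j : Fin n, i ≠ j → (1:ℝ) ≤ ((G.dist i j : ℝ))^2 := by
    intro i j hij
    have hpos : 0 < G.dist i j := hconn.pos_dist_of_ne hij
    have h1 : (1:ℝ) ≤ (G.dist i j : ℝ) := by exact_mod_cast hpos
    nlinarith
  have hMn : (n:ℝ) * ((n:ℝ) - 1) ≤ M := by
    have hrow : ∀ i : Fin n, ((n:ℝ) - 1) ≤ ∑ j, (G.dist i j : ℝ)^2 := by
      intro i
      have hsub : ∑ j ∈ Finset.univ.erase i, (G.dist i j : ℝ)^2 ≤ ∑ j, (G.dist i j : ℝ)^2 :=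
        Finset.sum_le_sum_of_subset_of_nonneg (Finset.subset_univ _)
          (fun j _ _ => by positivity)
      have hcard : ((Finset.univ.erase i).card : ℝ) = (n:ℝ) - 1 := by
        rw [Finset.card_erase_of_mem (Finset.mem_univ i)]
        simp [Finset.card_univ]
        have : 1 ≤ n := by omega
        push_cast [Nat.cast_sub this]
        ring
      have hlow : ((Finset.univ.erase i).card : ℝ) * 1 ≤
          ∑ j ∈ Finset.univ.erase i, (G.dist i j : ℝ)^2 := by
        rw [mul_one]
        have := Finset.card_nsmul_le_sum (Finset.univ.erase i)
          (fun j => (G.dist i j : ℝ)^2) 1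
          (fun j hj => hd1 i j (Ne.symm (Finset.ne_of_mem_erase hj)))
        simpa using this
      rw [hcard, mul_one] at hlow
      linarith
    have hconst : ∑ _i : Fin n, ((n:ℝ) - 1) = (n:ℝ) * ((n:ℝ) - 1) := by
      rw [Finset.sum_const, Finset.card_univ, Fintype.card_fin, nsmul_eq_mul]
    calc (n:ℝ) * ((n:ℝ) - 1) = ∑ _i : Fin n, ((n:ℝ) - 1) := hconst.symm
      _ ≤ M := Finset.sum_le_sum (fun i _ => hrow i)
  have hM2' : (2:ℝ) ≤ M := by nlinarith
  -- pick index with max |lam|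
  obtain ⟨j0, -, hj0⟩ := Finset.exists_max_image Finset.univ (fun i => |lam i|)
    ⟨⟨0, by omega⟩, Finset.mem_univ _⟩
  set x : ℝ := |lam j0| with hxdef
  have hx0 : 0 ≤ x := abs_nonneg _
  have hxM : M ≤ (n:ℝ) * x^2 := by
    rw [← hsumsq]
    calc ∑ i, (lam i)^2 ≤ ∑ _i : Fin n, x^2 :=
          Finset.sum_le_sum (fun i _ => by
            have := hj0 i (Finset.mem_univ i)
            calc (lam i)^2 = |lam i|^2 := (sq_abs _).symm
              _ ≤ x^2 := by nlinarith [abs_nonneg (lam i)])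
      _ = (n:ℝ) * x^2 := by
            rw [Finset.sum_const, Finset.card_univ, Fintype.card_fin, nsmul_eq_mul]
  have hnpos : (0:ℝ) < (n:ℝ) := by linarith
  have hx2ge1 : 1 ≤ x^2 := by
    nlinarith [hxM, hMn, mul_nonneg (by linarith : (0:ℝ) ≤ (n:ℝ)) (by linarith : (0:ℝ) ≤ (n:ℝ) - 2)]
  have hx1 : 1 ≤ x := by nlinarith [hx2ge1, hx0]
  -- split off j0
  set R2 : ℝ := ∑ i ∈ Finset.univ.erase j0, (lam i)^2 with hR2def
  have hR2nn : 0 ≤ R2 := Finset.sum_nonneg (fun i _ => sq_nonneg _)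
  have hsplitsq : (lam j0)^2 + R2 = M := by
    have h2 : lam j0 ^ 2 + ∑ i ∈ Finset.univ.erase j0, (lam i)^2 = ∑ i, (lam i)^2 :=
      Finset.add_sum_erase _ (fun i => (lam i)^2) (Finset.mem_univ j0)
    rw [hR2def]
    linarith [h2, hsumsq]
  have hsplit : lam j0 + ∑ i ∈ Finset.univ.erase j0, lam i = 0 := by
    have h2 : lam j0 + ∑ i ∈ Finset.univ.erase j0, lam i = ∑ i, lam i :=
      Finset.add_sum_erase _ lam (Finset.mem_univ j0)
    rw [h2]
    exact hsum0
  have hCS : (lam j0)^2 ≤ ((n:ℝ) - 1) * R2 := by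
    have hsq := sq_sum_le_card_mul_sum_sq
      (s := Finset.univ.erase j0) (f := lam)
    have hcard : (((Finset.univ.erase j0).card : ℕ) : ℝ) = (n:ℝ) - 1 := by
      rw [Finset.card_erase_of_mem (Finset.mem_univ j0)]
      simp [Finset.card_univ]
      have : 1 ≤ n := by omega
      push_cast [Nat.cast_sub this]
      ring
    have heq : lam j0 = -(∑ i ∈ Finset.univ.erase j0, lam i) := by linarith
    calc (lam j0)^2 = (∑ i ∈ Finset.univ.erase j0, lam i)^2 := by rw [heq]; ring
      _ ≤ (((Finset.univ.erase j0).card : ℕ) : ℝ) * R2 := by exact_mod_cast hsq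
      _ = ((n:ℝ) - 1) * R2 := by rw [hcard]
  have hR2_1 : 1 ≤ R2 := by
    have hx2 : x^2 = (lam j0)^2 := by rw [hxdef, sq_abs]
    nlinarith
  set y : ℝ := Real.sqrt R2 with hydef
  have hy2 : y^2 = R2 := Real.sq_sqrt hR2nn
  have hy0 : 0 ≤ y := Real.sqrt_nonneg _
  have hy1 : 1 ≤ y := by nlinarith
  have hxy2M : x^2 + y^2 = M := by
    rw [hy2]
    have hx2 : x^2 = (lam j0)^2 := by rw [hxdef, sq_abs]
    linarith
  -- the Estrada bound
  have hDEE : DEE G ≤ (n:ℝ) + ((Real.exp x - 1 - x) + (Real.exp y - 1 - y)) := by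
    have e1 : DEE G = (∑ i, (1 + lam i)) + ∑ i, (Real.exp (lam i) - 1 - lam i) := by
      rw [DEE, ← Finset.sum_add_distrib]
      apply Finset.sum_congr rfl
      intro i _
      ring
    have e2 : (∑ i, (1 + lam i)) = (n:ℝ) := by
      rw [Finset.sum_add_distrib, hsum0]
      simp [Finset.card_univ]
    have e3 : (Real.exp (lam j0) - 1 - lam j0)
          + ∑ i ∈ Finset.univ.erase j0, (Real.exp (lam i) - 1 - lam i)
        = ∑ i, (Real.exp (lam i) - 1 - lam i) :=
      Finset.add_sum_erase _ (fun i => Real.exp (lam i) - 1 - lam i) (Finset.mem_univ j0)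
    have b1 : Real.exp (lam j0) - 1 - lam j0 ≤ Real.exp x - 1 - x := by
      have := f_abs (lam j0)
      rw [← hxdef] at this
      exact this
    have b2 : ∑ i ∈ Finset.univ.erase j0, (Real.exp (lam i) - 1 - lam i)
        ≤ Real.exp y - 1 - y := by
      have := sum_f_le (Finset.univ.erase j0) lam
      rw [← hR2def, ← hydef] at this
      exact this
    rw [e1, e2, ← e3]
    linarith
  -- final key inequality
  have hfin : Real.exp x + Real.exp y < 1 + x + y + Real.exp (Real.sqrt (M - 1)) := by
    rcases le_total y x with hyx | hxy
    · have h := key_ineq hy1 hyx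
      rw [show x^2 + y^2 - 1 = M - 1 by linarith] at h
      exact h
    · have h := key_ineq hx1 hxy
      rw [show y^2 + x^2 - 1 = M - 1 by linarith] at h
      linarith
  rw [← hM2]
  linarith

end DistanceEstrada
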